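/- Let K_1, K_2 be fractal k-cubes of order n with digit sets D_1, D_2, let α ∈ A_k, and suppose D̂_1 := D_1 ∩ (n−1)P_α and D̂_2 := (D_2 ∩ (n−1)P_{−α}) + (n−1)α are both nonempty. Then F_α := K_1 ∩ (K_2 + α) equals K̂_1 ∩ K̂_2, where K̂_1, K̂_2 are the fractal k-cubes of order n with digit sets D̂_1 and D̂_2 respectively. -/

import Mathlib

open Set Pointwise MeasureTheory

noncomputable section

/-- Points of `ℝ^k`. -/
abbrev Pt (k : ℕ) := Fin k → ℝ

/-- A vector with all coordinates in `{0, 1, …, n−1}`. -/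
def IsDigit (n : ℕ) {k : ℕ} (d : Pt k) : Prop :=
  ∀ i, ∃ m : ℕ, m < n ∧ d i = (m : ℝ)

/-- A digit set: a nonempty subset of `{0, 1, …, n−1}^k`. -/
def IsDigitSet (n : ℕ) {k : ℕ} (D : Set (Pt k)) : Prop :=
  D.Nonempty ∧ ∀ d ∈ D, IsDigit n d

/-- `K` is the fractal `k`-cube of order `n` with digit set `D`:
a nonempty compact set with `nK = K + D`. -/
def IsFractalCube (n : ℕ) {k : ℕ} (D K : Set (Pt k)) : Prop :=
  K.Nonempty ∧ IsCompact K ∧ (n : ℝ) • K = K + D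

/-- `α ∈ A_k = {−1, 0, 1}^k`. -/
def IsAk {k : ℕ} (α : Pt k) : Prop :=
  ∀ i, α i = -1 ∨ α i = 0 ∨ α i = 1

/-- The unit cube `P = [0,1]^k`. -/
def unitCube (k : ℕ) : Set (Pt k) := {x | ∀ i, 0 ≤ x i ∧ x i ≤ 1}

/-- The face `P_α = P ∩ (P + α)`. -/
def face {k : ℕ} (α : Pt k) : Set (Pt k) :=
  unitCube k ∩ ((fun x => x + α) '' unitCube k)

/-- `α ⊑ β` : `β i = α i` whenever `α i ≠ 0`. -/
def SqLe {k : ℕ} (α β : Pt k) : Prop := ∀ i, α i ≠ 0 → β i = α i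

/-- `α ⊏ β`. -/
def SqLt {k : ℕ} (α β : Pt k) : Prop := SqLe α β ∧ α ≠ β

/-- `F_α = K₁ ∩ (K₂ + α)`. -/
def interF {k : ℕ} (K1 K2 : Set (Pt k)) (α : Pt k) : Set (Pt k) :=
  K1 ∩ ((fun x => x + α) '' K2)

/-- `G_{αβ} = D₁ ∩ (D₂ + nα − β)`. -/
def Gab (n : ℕ) {k : ℕ} (D1 D2 : Set (Pt k)) (α β : Pt k) : Set (Pt k) :=
  D1 ∩ ((fun x => x + ((n : ℝ) • α - β)) '' D2)

/-- `G_α = G_{αα} = D₁ ∩ (D₂ + (n−1)α)`. -/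
def Ga (n : ℕ) {k : ℕ} (D1 D2 : Set (Pt k)) (α : Pt k) : Set (Pt k) :=
  Gab n D1 D2 α α

/-- `β ≻ α` : there is a chain `α = α₀ ⊏ α₁ ⊏ … ⊏ α_p = β` in `A_k` (`p ≥ 1`)
with all `F_{α_j}` nonempty and all `G_{α_{j−1} α_j}` nonempty. -/
def GSucc (n : ℕ) {k : ℕ} (D1 D2 K1 K2 : Set (Pt k)) (β α : Pt k) : Prop :=
  ∃ p : ℕ, 0 < p ∧ ∃ c : ℕ → Pt k, c 0 = α ∧ c p = β ∧
    (∀ j ≤ p, IsAk (c j)) ∧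
    (∀ j < p, SqLt (c j) (c (j + 1))) ∧
    (∀ j ≤ p, (interF K1 K2 (c j)).Nonempty) ∧
    (∀ j < p, (Gab n D1 D2 (c j) (c (j + 1))).Nonempty)

/-- `β ≽ α`. -/
def GSuccEq (n : ℕ) {k : ℕ} (D1 D2 K1 K2 : Set (Pt k)) (β α : Pt k) : Prop :=
  GSucc n D1 D2 K1 K2 β α ∨ β = α

/-- The map `S_d(x) = (x + d)/n`. -/
def Sdig (n : ℕ) {k : ℕ} (d : Pt k) : Pt k → Pt k :=
  fun x => (n : ℝ)⁻¹ • (x + d)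

/-- The `p`-th refinement digit set
`D^(p) = { n^{p−1} d₁ + n^{p−2} d₂ + … + d_p : (d₁, …, d_p) ∈ D^p }`. -/
def refineD (n p : ℕ) {k : ℕ} (D : Set (Pt k)) : Set (Pt k) :=
  {x | ∃ f : Fin p → Pt k, (∀ j, f j ∈ D) ∧
    x = ∑ j : Fin p, ((n : ℝ) ^ (p - 1 - (j : ℕ))) • f j}

/-- A maximal vertex of the structure graph: `F_β ≠ ∅` and no `γ ≻ β`. -/
def IsMaxVertex (n : ℕ) {k : ℕ} (D1 D2 K1 K2 : Set (Pt k)) (β : Pt k) : Prop :=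
  IsAk β ∧ (interF K1 K2 β).Nonempty ∧ ¬∃ γ, IsAk γ ∧ GSucc n D1 D2 K1 K2 γ β

/-- The product `∏ #G_{α_j α_{j+1}}` over consecutive pairs of a chain. -/
def chainProd (n : ℕ) {k : ℕ} (D1 D2 : Set (Pt k)) : List (Pt k) → ℕ
  | [] => 1
  | [_] => 1
  | a :: b :: rest => (Gab n D1 D2 a b).ncard * chainProd n D1 D2 (b :: rest)

/-- A chain `α = α₁ ⊏ α₂ ⊏ … ⊏ α_p = β` inside `Γ_α` ending at a maximal vertex `β`. -/
def IsMaxChainFrom (n : ℕ) {k : ℕ} (D1 D2 K1 K2 : Set (Pt k)) (α : Pt k)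
    (c : List (Pt k)) : Prop :=
  c ≠ [] ∧ c.head? = some α ∧ List.Chain' SqLt c ∧
  (∀ β ∈ c, IsAk β ∧ GSuccEq n D1 D2 K1 K2 β α) ∧
  ∃ β, c.getLast? = some β ∧ IsMaxVertex n D1 D2 K1 K2 β


namespace FCaux

variable {k : ℕ}

def partials (n : ℕ) {k : ℕ} (d : ℕ → Pt k) (m : ℕ) : Pt k :=
  ∑ j ∈ Finset.range m, ((n:ℝ)^(j+1))⁻¹ • d j

def repSet (n : ℕ) {k : ℕ} (D : Set (Pt k)) : Set (Pt k) :=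
  {x | ∃ d : ℕ → Pt k, (∀ j, d j ∈ D) ∧
    Filter.Tendsto (partials n d) Filter.atTop (nhds x)}

lemma geom_sum_aux {n : ℕ} (hn : 2 ≤ n) (m : ℕ) :
    ∑ j ∈ Finset.range m, ((n:ℝ)^(j+1))⁻¹ * ((n:ℝ) - 1) = 1 - ((n:ℝ)^m)⁻¹ := by
  have hn0 : (0:ℝ) < (n:ℝ) := by
    have : (2:ℝ) ≤ (n:ℝ) := by exact_mod_cast hn
    linarith
  induction m with
  | zero => simp
  | succ m ih =>
    rw [Finset.sum_range_succ, ih]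
    have hne : (n:ℝ) ^ m ≠ 0 := by positivity
    have hne1 : (n:ℝ) ^ (m+1) ≠ 0 := by positivity
    field_simp
    ring

lemma npos {n : ℕ} (hn : 2 ≤ n) : (1:ℝ) < (n:ℝ) := by
  have : (2:ℝ) ≤ (n:ℝ) := by exact_mod_cast hn
  linarith

lemma tendsto_inv_pow_zero {n : ℕ} (hn : 2 ≤ n) :
    Filter.Tendsto (fun m : ℕ => ((n:ℝ)^m)⁻¹) Filter.atTop (nhds 0) := by
  have h1 := npos hn
  have h := tendsto_pow_atTop_nhds_zero_of_lt_one (by positivity : (0:ℝ) ≤ (n:ℝ)⁻¹)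
    (by rw [inv_lt_one_iff₀]; right; exact h1)
  exact h.congr fun m => inv_pow _ _

lemma tendsto_inv_pow_smul {n : ℕ} (hn : 2 ≤ n) (w : ℕ → Pt k) (C : ℝ)
    (hw : ∀ m, ‖w m‖ ≤ C) :
    Filter.Tendsto (fun m => ((n:ℝ)^m)⁻¹ • w m) Filter.atTop (nhds 0) := by
  have h1 := npos hn
  apply squeeze_zero_norm (t₀ := Filter.atTop) (a := fun m => ((n:ℝ)^m)⁻¹ * C)
  · intro m
    rw [norm_smul, Real.norm_eq_abs, abs_of_nonneg (by positivity)]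
    exact mul_le_mul_of_nonneg_left (hw m) (by positivity)
  · simpa using (tendsto_inv_pow_zero hn).mul_const C

lemma tendsto_of_remainder {n : ℕ} (hn : 2 ≤ n) (x : Pt k) (w : ℕ → Pt k) (C : ℝ)
    (hw : ∀ m, ‖w m‖ ≤ C) (p : ℕ → Pt k)
    (hp : ∀ m, p m = x - ((n:ℝ)^m)⁻¹ • w m) :
    Filter.Tendsto p Filter.atTop (nhds x) := by
  have h := (tendsto_const_nhds (x := x) (f := Filter.atTop (α := ℕ))).sub
    (tendsto_inv_pow_smul hn w C hw)
  rw [sub_zero] at h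
  exact h.congr fun m => (hp m).symm

lemma coord_facts {n : ℕ} (hn : 2 ≤ n) (a : ℕ → ℝ)
    (h0 : ∀ j, 0 ≤ a j) (h1 : ∀ j, a j ≤ (n:ℝ) - 1) {L : ℝ}
    (hL : Filter.Tendsto (fun m => ∑ j ∈ Finset.range m, ((n:ℝ)^(j+1))⁻¹ * a j)
      Filter.atTop (nhds L)) :
    0 ≤ L ∧ L ≤ 1 ∧ (L = 1 → ∀ j, a j = (n:ℝ) - 1) ∧ (L = 0 → ∀ j, a j = 0) := by
  have hn1 := npos hn
  have hterm_nonneg : ∀ j, 0 ≤ ((n:ℝ)^(j+1))⁻¹ * a j :=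
    fun j => mul_nonneg (by positivity) (h0 j)
  have hterm_le : ∀ j, ((n:ℝ)^(j+1))⁻¹ * a j ≤ ((n:ℝ)^(j+1))⁻¹ * ((n:ℝ)-1) :=
    fun j => mul_le_mul_of_nonneg_left (h1 j) (by positivity)
  have hsum_le : ∀ m, ∑ j ∈ Finset.range m, ((n:ℝ)^(j+1))⁻¹ * a j ≤ 1 - ((n:ℝ)^m)⁻¹ := by
    intro m
    rw [← geom_sum_aux hn]
    exact Finset.sum_le_sum fun j _ => hterm_le j
  refine ⟨?_, ?_, ?_, ?_⟩
  · exact ge_of_tendsto' hL fun m => Finset.sum_nonneg fun j _ => hterm_nonneg j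
  · refine le_of_tendsto' hL fun m => (hsum_le m).trans ?_
    have : (0:ℝ) ≤ ((n:ℝ)^m)⁻¹ := by positivity
    linarith
  · intro hL1 J
    have key : ∀ m, J < m →
        ∑ j ∈ Finset.range m, ((n:ℝ)^(j+1))⁻¹ * a j
          ≤ 1 - ((n:ℝ)^(J+1))⁻¹ * (((n:ℝ)-1) - a J) := by
      intro m hm
      have hJm : J ∈ Finset.range m := Finset.mem_range.mpr hm
      have e1 : ∑ j ∈ Finset.range m, ((n:ℝ)^(j+1))⁻¹ * a j
          = ((n:ℝ)^(J+1))⁻¹ * a J + ∑ j ∈ (Finset.range m).erase J, ((n:ℝ)^(j+1))⁻¹ * a j :=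
        (Finset.add_sum_erase _ _ hJm).symm
      have e2 : ∑ j ∈ (Finset.range m).erase J, ((n:ℝ)^(j+1))⁻¹ * a j
          ≤ ∑ j ∈ (Finset.range m).erase J, ((n:ℝ)^(j+1))⁻¹ * ((n:ℝ)-1) :=
        Finset.sum_le_sum fun j _ => hterm_le j
      have e3 : ∑ j ∈ (Finset.range m).erase J, ((n:ℝ)^(j+1))⁻¹ * ((n:ℝ)-1)
          = (1 - ((n:ℝ)^m)⁻¹) - ((n:ℝ)^(J+1))⁻¹ * ((n:ℝ)-1) := by
        rw [Finset.sum_erase_eq_sub hJm, geom_sum_aux hn]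
      have hnm : (0:ℝ) ≤ ((n:ℝ)^m)⁻¹ := by positivity
      rw [e1]
      rw [e3] at e2
      nlinarith
    have hle : L ≤ 1 - ((n:ℝ)^(J+1))⁻¹ * (((n:ℝ)-1) - a J) :=
      le_of_tendsto hL (Filter.eventually_atTop.mpr ⟨J+1, fun m hm => key m (by omega)⟩)
    have hpos : 0 < ((n:ℝ)^(J+1))⁻¹ := by positivity
    have h1' := h1 J
    nlinarith
  · intro hL0 J
    have key : ∀ m, J < m → ((n:ℝ)^(J+1))⁻¹ * a J
        ≤ ∑ j ∈ Finset.range m, ((n:ℝ)^(j+1))⁻¹ * a j := fun m hm =>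
      Finset.single_le_sum (fun j _ => hterm_nonneg j) (Finset.mem_range.mpr hm)
    have hle : ((n:ℝ)^(J+1))⁻¹ * a J ≤ L :=
      ge_of_tendsto hL (Filter.eventually_atTop.mpr ⟨J+1, fun m hm => key m (by omega)⟩)
    have hpos : 0 < ((n:ℝ)^(J+1))⁻¹ := by positivity
    nlinarith [h0 J]

lemma smul_inv_pow {n : ℕ} (hn : 2 ≤ n) (j : ℕ) (v : Pt k) :
    (n:ℝ) • (((n:ℝ)^(j+1))⁻¹ • v) = ((n:ℝ)^j)⁻¹ • v := by
  have h1 := npos hn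
  rw [smul_smul]
  congr 1
  rw [pow_succ]
  field_simp

lemma subset_repSet {n : ℕ} (hn : 2 ≤ n) {D K : Set (Pt k)}
    (hKc : IsCompact K) (hKD : (n:ℝ) • K = K + D) :
    K ⊆ repSet n D := by
  classical
  have h1 := npos hn
  intro x hx
  have hstep : ∀ y ∈ K, ∃ p : Pt k × Pt k, p.1 ∈ K ∧ p.2 ∈ D ∧ (n:ℝ) • y = p.1 + p.2 := by
    intro y hy
    have hmem : (n:ℝ) • y ∈ K + D := by
      rw [← hKD]; exact Set.smul_mem_smul_set hy
    obtain ⟨a, ha, b, hb, hab⟩ := Set.mem_add.mp hmem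
    exact ⟨(a, b), ha, hb, hab.symm⟩
  let g : Pt k → Pt k × Pt k := fun y =>
    if h : y ∈ K then (hstep y h).choose else (y, 0)
  let seq : ℕ → Pt k := fun m => (fun y => (g y).1)^[m] x
  have hseq_succ : ∀ m, seq (m+1) = (g (seq m)).1 := fun m =>
    Function.iterate_succ_apply' _ _ _
  have hseqK : ∀ m, seq m ∈ K := by
    intro m; induction m with
    | zero => exact hx
    | succ m ih =>
      rw [hseq_succ]
      simp only [g, dif_pos ih]
      exact (hstep (seq m) ih).choose_spec.1
  let d : ℕ → Pt k := fun m => (g (seq m)).2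
  have hdD : ∀ m, d m ∈ D := by
    intro m
    simp only [d, g, dif_pos (hseqK m)]
    exact (hstep _ (hseqK m)).choose_spec.2.1
  have hrec : ∀ m, (n:ℝ) • seq m = seq (m+1) + d m := by
    intro m
    rw [hseq_succ]
    simp only [d, g, dif_pos (hseqK m)]
    exact (hstep _ (hseqK m)).choose_spec.2.2
  have key : ∀ m, partials n d m = x - ((n:ℝ)^m)⁻¹ • seq m := by
    intro m; induction m with
    | zero => simp [partials, seq]
    | succ m ih =>
      rw [partials, Finset.sum_range_succ, ← partials, ih]
      have hsm : ((n:ℝ)^m)⁻¹ • seq m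
          = ((n:ℝ)^(m+1))⁻¹ • seq (m+1) + ((n:ℝ)^(m+1))⁻¹ • d m := by
        have h2 : ((n:ℝ)^(m+1))⁻¹ • ((n:ℝ) • seq m)
            = ((n:ℝ)^(m+1))⁻¹ • (seq (m+1) + d m) := by rw [hrec]
        rw [smul_add] at h2
        rw [← h2, smul_smul]
        congr 1
        rw [pow_succ]
        field_simp
      rw [hsm]
      abel
  obtain ⟨r, hr⟩ := hKc.isBounded.subset_closedBall 0
  refine ⟨d, hdD, tendsto_of_remainder hn x seq r (fun m => ?_) _ key⟩
  simpa [Metric.mem_closedBall, dist_zero_right] using hr (hseqK m)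

lemma repSet_subset {n : ℕ} (hn : 2 ≤ n) {D K : Set (Pt k)}
    (hKne : K.Nonempty) (hKc : IsCompact K) (hKD : (n:ℝ) • K = K + D) :
    repSet n D ⊆ K := by
  have h1 := npos hn
  obtain ⟨x0, hx0⟩ := hKne
  have hmem : ∀ (m : ℕ) (d : ℕ → Pt k), (∀ j, d j ∈ D) →
      partials n d m + ((n:ℝ)^m)⁻¹ • x0 ∈ K := by
    intro m
    induction m with
    | zero => intro d hd; simpa [partials] using hx0
    | succ m ih =>
      intro d hd
      have hy := ih (fun j => d (j+1)) (fun j => hd (j+1))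
      have hmem2 : (partials n (fun j => d (j+1)) m + ((n:ℝ)^m)⁻¹ • x0) + d 0
          ∈ (n:ℝ) • K := by
        rw [hKD]; exact Set.add_mem_add hy (hd 0)
      obtain ⟨z, hz, hzeq⟩ := hmem2
      have hid : (n:ℝ) • (partials n d (m+1) + ((n:ℝ)^(m+1))⁻¹ • x0)
          = (partials n (fun j => d (j+1)) m + ((n:ℝ)^m)⁻¹ • x0) + d 0 := by
        rw [partials, Finset.sum_range_succ', partials]
        rw [smul_add, smul_add, Finset.smul_sum]
        rw [smul_inv_pow hn m x0]
        have hterm : ∀ j ∈ Finset.range m,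
            (n:ℝ) • (((n:ℝ)^(j+1+1))⁻¹ • d (j+1)) = ((n:ℝ)^(j+1))⁻¹ • d (j+1) :=
          fun j _ => smul_inv_pow hn (j+1) (d (j+1))
        rw [Finset.sum_congr rfl hterm]
        have h0 : (n:ℝ) • (((n:ℝ)^(0+1))⁻¹ • d 0) = d 0 := by
          rw [smul_inv_pow hn 0]; simp
        rw [h0]
        abel
      have hz' : z = partials n d (m+1) + ((n:ℝ)^(m+1))⁻¹ • x0 := by
        apply smul_right_injective (Pt k) (by positivity : (n:ℝ) ≠ 0)
        show (n:ℝ) • z = (n:ℝ) • _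
        rw [hid]
        exact hzeq
      rw [← hz']; exact hz
  rintro x ⟨d, hd, hx⟩
  have htend : Filter.Tendsto (fun m => partials n d m + ((n:ℝ)^m)⁻¹ • x0)
      Filter.atTop (nhds x) := by
    have h0 := tendsto_inv_pow_smul hn (fun _ => x0) ‖x0‖ (fun _ => le_refl _)
    simpa using hx.add h0
  exact hKc.isClosed.mem_of_tendsto htend
    (Filter.Eventually.of_forall fun m => hmem m d hd)

lemma repSet_eq {k n : ℕ} (hn : 2 ≤ n) {D K : Set (Pt k)}
    (hK : IsFractalCube n D K) : K = repSet n D :=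
  Set.Subset.antisymm (subset_repSet hn hK.2.1 hK.2.2)
    (repSet_subset hn hK.1 hK.2.1 hK.2.2)

lemma partials_apply {n : ℕ} (d : ℕ → Pt k) (m : ℕ) (i : Fin k) :
    partials n d m i = ∑ j ∈ Finset.range m, ((n:ℝ)^(j+1))⁻¹ * d j i := by
  simp [partials, Finset.sum_apply]

lemma tendsto_coord {n : ℕ} {d : ℕ → Pt k} {x : Pt k}
    (h : Filter.Tendsto (partials n d) Filter.atTop (nhds x)) (i : Fin k) :
    Filter.Tendsto (fun m => ∑ j ∈ Finset.range m, ((n:ℝ)^(j+1))⁻¹ * d j i)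
      Filter.atTop (nhds (x i)) := by
  have := tendsto_pi_nhds.mp h i
  exact this.congr fun m => partials_apply d m i

lemma digit_bounds {n : ℕ} {d : Pt k} (h : IsDigit n d) (i : Fin k) :
    0 ≤ d i ∧ d i ≤ (n:ℝ) - 1 := by
  obtain ⟨m, hm, he⟩ := h i
  rw [he]
  constructor
  · positivity
  · have : (m:ℝ) + 1 ≤ (n:ℝ) := by exact_mod_cast hm
    linarith

lemma partials_add_shift {n : ℕ} (hn : 2 ≤ n) (f : ℕ → Pt k) (α : Pt k) (m : ℕ) :
    partials n (fun j => f j + ((n:ℝ)-1) • α) m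
      = partials n f m + (1 - ((n:ℝ)^m)⁻¹) • α := by
  unfold partials
  rw [← geom_sum_aux hn m, Finset.sum_smul, ← Finset.sum_add_distrib]
  refine Finset.sum_congr rfl fun j _ => ?_
  rw [smul_add, smul_smul]

lemma tendsto_shift_coeff {n : ℕ} (hn : 2 ≤ n) (α : Pt k) :
    Filter.Tendsto (fun m : ℕ => (1 - ((n:ℝ)^m)⁻¹) • α) Filter.atTop (nhds α) := by
  have h := ((tendsto_const_nhds (x := (1:ℝ)) (f := Filter.atTop (α := ℕ))).sub
    (tendsto_inv_pow_zero hn)).smul_const α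
  simpa using h

lemma isAk_neg {α : Pt k} (h : IsAk α) : IsAk (-α) := by
  intro i
  rcases h i with h' | h' | h' <;> simp [h']

lemma mem_scaled_face_of {n : ℕ} (hn : 2 ≤ n) {α : Pt k} (hα : IsAk α) {z : Pt k}
    (hbounds : ∀ i, 0 ≤ z i ∧ z i ≤ (n:ℝ) - 1)
    (hface : ∀ i, (α i = 1 → z i = (n:ℝ) - 1) ∧ (α i = -1 → z i = 0)) :
    z ∈ ((n:ℝ) - 1) • face α := by
  have h2 : (2:ℝ) ≤ (n:ℝ) := by exact_mod_cast hn
  have hcpos : (0:ℝ) < (n:ℝ) - 1 := by linarith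
  have hc : ((n:ℝ) - 1) ≠ 0 := ne_of_gt hcpos
  rw [Set.mem_smul_set_iff_inv_smul_mem₀ hc]
  have hval : ∀ i, (((n:ℝ)-1)⁻¹ • z) i = ((n:ℝ)-1)⁻¹ * z i := fun i => rfl
  have hcoord : ∀ i, 0 ≤ ((n:ℝ)-1)⁻¹ * z i ∧ ((n:ℝ)-1)⁻¹ * z i ≤ 1
      ∧ 0 ≤ ((n:ℝ)-1)⁻¹ * z i - α i ∧ ((n:ℝ)-1)⁻¹ * z i - α i ≤ 1 := by
    intro i
    obtain ⟨hz0, hz1⟩ := hbounds i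
    have hle1 : ((n:ℝ)-1)⁻¹ * z i ≤ 1 := by
      rw [← div_eq_inv_mul]
      exact div_le_one_of_le₀ hz1 hcpos.le
    have hge0 : 0 ≤ ((n:ℝ)-1)⁻¹ * z i := by positivity
    rcases hα i with h' | h' | h'
    · have hz := (hface i).2 h'
      rw [h', hz]
      norm_num
    · rw [h']
      exact ⟨hge0, hle1, by simpa using hge0, by simpa using hle1⟩
    · have hz := (hface i).1 h'
      rw [h', hz]
      rw [inv_mul_cancel₀ hc]
      norm_num
  constructor
  · intro i
    rw [hval]
    exact ⟨(hcoord i).1, (hcoord i).2.1⟩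
  · refine ⟨((n:ℝ)-1)⁻¹ • z - α, fun i => ?_, by simp⟩
    have : (((n:ℝ)-1)⁻¹ • z - α) i = ((n:ℝ)-1)⁻¹ * z i - α i := rfl
    rw [this]
    exact ⟨(hcoord i).2.2.1, (hcoord i).2.2.2⟩

end FCaux

open FCaux


/-- `F_α = K₁ ∩ (K₂ + α)` equals `K̂₁ ∩ K̂₂`, where `K̂₁, K̂₂` are the
fractal cubes with digit sets `D̂₁ = D₁ ∩ (n−1)P_α` and
`D̂₂ = (D₂ ∩ (n−1)P_{−α}) + (n−1)α`. -/
theorem interF_eq_inter_hat {k n : ℕ} (hk : 1 ≤ k) (hn : 2 ≤ n)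
    (D1 D2 K1 K2 : Set (Pt k)) (hD1 : IsDigitSet n D1) (hD2 : IsDigitSet n D2)
    (hK1 : IsFractalCube n D1 K1) (hK2 : IsFractalCube n D2 K2)
    (α : Pt k) (hα : IsAk α)
    (Dh1 Dh2 : Set (Pt k))
    (hDh1 : Dh1 = D1 ∩ ((n : ℝ) - 1) • face α)
    (hDh2 : Dh2 = (fun x => x + ((n : ℝ) - 1) • α) '' (D2 ∩ ((n : ℝ) - 1) • face (-α)))
    (h1 : Dh1.Nonempty) (h2 : Dh2.Nonempty)
    (Kh1 Kh2 : Set (Pt k))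
    (hKh1 : IsFractalCube n Dh1 Kh1) (hKh2 : IsFractalCube n Dh2 Kh2) :
    interF K1 K2 α = Kh1 ∩ Kh2 := by
  classical
  have h2r : (2:ℝ) ≤ (n:ℝ) := by exact_mod_cast hn
  have hK1r := repSet_eq hn hK1
  have hK2r := repSet_eq hn hK2
  have hKh1r := repSet_eq hn hKh1
  have hKh2r := repSet_eq hn hKh2
  ext x
  simp only [interF, Set.mem_inter_iff, Set.mem_image]
  constructor
  · rintro ⟨hx1, y, hy, rfl⟩
    rw [hK1r] at hx1
    rw [hK2r] at hy
    obtain ⟨d, hd, htd⟩ := hx1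
    obtain ⟨f, hf, htf⟩ := hy
    have hdb : ∀ j i, 0 ≤ d j i ∧ d j i ≤ (n:ℝ) - 1 :=
      fun j i => digit_bounds (hD1.2 _ (hd j)) i
    have hfb : ∀ j i, 0 ≤ f j i ∧ f j i ≤ (n:ℝ) - 1 :=
      fun j i => digit_bounds (hD2.2 _ (hf j)) i
    have hxc : ∀ i, 0 ≤ (y + α) i ∧ (y + α) i ≤ 1 ∧
        ((y + α) i = 1 → ∀ j, d j i = (n:ℝ) - 1) ∧ ((y + α) i = 0 → ∀ j, d j i = 0) :=
      fun i => coord_facts hn (fun j => d j i) (fun j => (hdb j i).1)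
        (fun j => (hdb j i).2) (tendsto_coord htd i)
    have hyc : ∀ i, 0 ≤ y i ∧ y i ≤ 1 ∧
        (y i = 1 → ∀ j, f j i = (n:ℝ) - 1) ∧ (y i = 0 → ∀ j, f j i = 0) :=
      fun i => coord_facts hn (fun j => f j i) (fun j => (hfb j i).1)
        (fun j => (hfb j i).2) (tendsto_coord htf i)
    have hadd : ∀ i, (y + α) i = y i + α i := fun i => rfl
    have hA : ∀ i, α i = 1 → ((y + α) i = 1 ∧ y i = 0) := by
      intro i h
      have h1 := (hxc i).2.1
      have h2 := (hyc i).1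
      rw [hadd i, h] at h1 ⊢
      constructor <;> linarith
    have hB : ∀ i, α i = -1 → ((y + α) i = 0 ∧ y i = 1) := by
      intro i h
      have h1 := (hxc i).1
      have h2 := (hyc i).2.1
      rw [hadd i, h] at h1 ⊢
      constructor <;> linarith
    constructor
    · rw [hKh1r]
      refine ⟨d, fun j => ?_, htd⟩
      rw [hDh1]
      refine ⟨hd j, mem_scaled_face_of hn hα (hdb j) fun i => ⟨fun h => ?_, fun h => ?_⟩⟩
      · exact (hxc i).2.2.1 ((hA i h).1) j
      · exact (hxc i).2.2.2 ((hB i h).1) j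
    · rw [hKh2r]
      refine ⟨fun j => f j + ((n:ℝ)-1) • α, fun j => ?_, ?_⟩
      · rw [hDh2]
        refine ⟨f j, ⟨hf j, mem_scaled_face_of hn (isAk_neg hα) (hfb j)
          fun i => ⟨fun h => ?_, fun h => ?_⟩⟩, rfl⟩
        · have hai : α i = -1 := by
            have : -(α i) = 1 := h
            linarith
          exact (hyc i).2.2.1 ((hB i hai).2) j
        · have hai : α i = 1 := by
            have : -(α i) = -1 := h
            linarith
          exact (hyc i).2.2.2 ((hA i hai).2) j
      · have heq : ∀ m, partials n (fun j => f j + ((n:ℝ)-1) • α) m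
            = partials n f m + (1 - ((n:ℝ)^m)⁻¹) • α := partials_add_shift hn f α
        have := htf.add (tendsto_shift_coeff hn α)
        exact this.congr fun m => (heq m).symm
  · rintro ⟨hx1, hx2⟩
    rw [hKh1r] at hx1
    rw [hKh2r] at hx2
    obtain ⟨d, hd, htd⟩ := hx1
    obtain ⟨e, he, hte⟩ := hx2
    constructor
    · rw [hK1r]
      refine ⟨d, fun j => ?_, htd⟩
      have := hd j
      rw [hDh1] at this
      exact this.1
    · have hex : ∀ j, ∃ g, g ∈ D2 ∧ e j = g + ((n:ℝ)-1) • α := by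
        intro j
        have := he j
        rw [hDh2] at this
        obtain ⟨g, hg, hge⟩ := this
        exact ⟨g, hg.1, hge.symm⟩
      choose f hfD hfe using hex
      have heq : ∀ m, partials n e m = partials n f m + (1 - ((n:ℝ)^m)⁻¹) • α := by
        intro m
        have : partials n e m = partials n (fun j => f j + ((n:ℝ)-1) • α) m := by
          unfold partials
          exact Finset.sum_congr rfl fun j _ => by rw [hfe j]
        rw [this, partials_add_shift hn f α]
      refine ⟨x - α, ?_, by simp⟩
      rw [hK2r]
      refine ⟨f, hfD, ?_⟩
      have := hte.sub (tendsto_shift_coeff hn α)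
      exact this.congr fun m => by rw [heq m]; abel
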